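/- arXiv:1608.06017 — 6 statements merged into one kernel-verified Lean document; each statement's English description precedes it below -/
import Mathlib

section
/- For n = 4, a weighted graph f : E(K_4) → ℝ is a real linear combination of the characteristic vectors of the four triangles of K_4 if and only if the sum of the weights on each of the three perfect matchings (pairs of disjoint edges) of K_4 is the same constant. -/
lemma sumtri (g : Finset (Fin 4) → ℝ) :
    ∑ K ∈ Finset.univ.filter (fun K : Finset (Fin 4) => K.card = 3), g K =
    g {0,1,2} + g {0,1,3} + g {0,2,3} + g {1,2,3} := by
  rw [show (Finset.univ.filter (fun K : Finset (Fin 4) => K.card = 3)) =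
    {{0,1,2},{0,1,3},{0,2,3},{1,2,3}} from by decide]
  rw [show ({{0,1,2},{0,1,3},{0,2,3},{1,2,3}} : Finset (Finset (Fin 4))) =
    insert {0,1,2} (insert {0,1,3} (insert {0,2,3} {{1,2,3}})) from rfl]
  rw [Finset.sum_insert (by decide), Finset.sum_insert (by decide),
    Finset.sum_insert (by decide), Finset.sum_singleton]
  ring

/-- For n = 4, a weighted graph is a linear combination of the four triangles
iff the sums over the three perfect matchings of K_4 agree. -/
theorem stmt_0 (f : Finset (Fin 4) → ℝ) :
    (∃ c : Finset (Fin 4) → ℝ, ∀ e : Finset (Fin 4), e.card = 2 →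
      f e = ∑ K ∈ Finset.univ.filter (fun K : Finset (Fin 4) => K.card = 3),
        c K * (if e ⊆ K then 1 else 0)) ↔
    (f {0, 1} + f {2, 3} = f {0, 2} + f {1, 3} ∧
     f {0, 1} + f {2, 3} = f {0, 3} + f {1, 2}) := by
  constructor
  · rintro ⟨c, h⟩
    have h01 := h {0,1} (by decide)
    have h02 := h {0,2} (by decide)
    have h03 := h {0,3} (by decide)
    have h12 := h {1,2} (by decide)
    have h13 := h {1,3} (by decide)
    have h23 := h {2,3} (by decide)
    rw [sumtri] at h01 h02 h03 h12 h13 h23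
    simp (config := { decide := true }) only [if_true, if_false] at h01 h02 h03 h12 h13 h23
    constructor <;> linarith [h01, h02, h03, h12, h13, h23]
  · rintro ⟨h1, h2⟩
    set c : Finset (Fin 4) → ℝ := fun K =>
      if K = {0,1,2} then (f {1,2} + f {0,2} - f {2,3})/2 else
      if K = {0,1,3} then (f {1,3} + f {0,3} - f {2,3})/2 else
      if K = {0,2,3} then (f {2,3} + f {0,3} - f {1,3})/2 else
      if K = {1,2,3} then (f {2,3} + f {1,3} - f {0,3})/2 else 0 with hc
    have hc1 : c {0,1,2} = (f {1,2} + f {0,2} - f {2,3})/2 := by rw [hc]; simp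
    have hc2 : c {0,1,3} = (f {1,3} + f {0,3} - f {2,3})/2 := by
      rw [hc]; simp only; rw [if_neg (by decide)]; norm_num
    have hc3 : c {0,2,3} = (f {2,3} + f {0,3} - f {1,3})/2 := by
      rw [hc]; simp only; rw [if_neg (by decide), if_neg (by decide)]; norm_num
    have hc4 : c {1,2,3} = (f {2,3} + f {1,3} - f {0,3})/2 := by
      rw [hc]; simp only
      rw [if_neg (by decide), if_neg (by decide), if_neg (by decide)]; norm_num
    refine ⟨c, ?_⟩
    intro e he
    have hm : e ∈ ({{0,1},{0,2},{0,3},{1,2},{1,3},{2,3}} : Finset (Finset (Fin 4))) := by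
      have h' : e ∈ Finset.univ.filter (fun s : Finset (Fin 4) => s.card = 2) := by
        simp [he]
      rwa [show Finset.univ.filter (fun s : Finset (Fin 4) => s.card = 2) =
        {{0,1},{0,2},{0,3},{1,2},{1,3},{2,3}} from by decide] at h'
    rw [sumtri]
    fin_cases hm <;>
      simp (config := { decide := true }) only [hc1, hc2, hc3, hc4, if_true, if_false] <;>
      linarith
end

section
/- Let n = 5 and let W be the 10 × 10 inclusion matrix of 2-subsets versus 3-subsets of [5], i.e., W(e,K) = 1 if e ⊆ K and 0 otherwise. Then the matrix U with rows indexed by 3-subsets and columns by 2-subsets, defined by U(K,e) = 1/3 if |K ∩ e| ∈ {0,2} and U(K,e) = -1/6 if |K ∩ e| = 1, satisfies U W = I. -/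
abbrev E5 := {e : Finset (Fin 5) // e.card = 2}
abbrev T5 := {K : Finset (Fin 5) // K.card = 3}

/-- The inclusion matrix of pairs vs triples of [5]. -/
def W5 : Matrix E5 T5 ℝ := fun e K => if e.1 ⊆ K.1 then 1 else 0

/-- The claimed inverse. -/
noncomputable def U5 : Matrix T5 E5 ℝ := fun K e => if (K.1 ∩ e.1).card = 1 then -(1/6) else 1/3

abbrev WZ : Matrix E5 T5 ℤ := fun e K => if e.1 ⊆ K.1 then 1 else 0
abbrev UZ : Matrix T5 E5 ℤ := fun K e => if (K.1 ∩ e.1).card = 1 then -1 else 2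

set_option maxRecDepth 100000 in
lemma hZ : UZ * WZ = (6 : ℤ) • 1 := by decide

theorem stmt_3 : U5 * W5 = 1 := by
  have h1 : U5 = (6 : ℝ)⁻¹ • UZ.map (Int.castRingHom ℝ) := by
    ext K e
    simp only [U5, UZ, Matrix.smul_apply, Matrix.map_apply, apply_ite (Int.castRingHom ℝ)]
    split <;> norm_num
  have h2 : W5 = WZ.map (Int.castRingHom ℝ) := by
    ext e K
    simp only [W5, WZ, Matrix.map_apply, apply_ite (Int.castRingHom ℝ)]
    split <;> norm_num
  rw [h1, h2, Matrix.smul_mul, ← Matrix.map_mul, hZ]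
  ext i j
  simp only [Matrix.smul_apply, Matrix.map_apply, Matrix.one_apply, smul_ite, smul_eq_mul]
  split <;> norm_num
end

section
/- Let n ≥ 5 and suppose y : binom([n],2) → F_3 satisfies y(e₁) + y(e₂) + y(e₃) = 0 for the three edges of every triangle in K_n. Then y is constant. -/
lemma tri_enum {α : Type*} [DecidableEq α] {a b c : α}
    (hab : a ≠ b) (hac : a ≠ c) (hbc : b ≠ c) :
    ({a,b,c} : Finset α).powerset.filter (fun e => e.card = 2)
      = {({a,b} : Finset α), {a,c}, {b,c}} := by
  ext e
  simp only [Finset.mem_filter, Finset.mem_powerset, Finset.mem_insert, Finset.mem_singleton]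
  constructor
  · rintro ⟨hsub, hcard⟩
    rw [Finset.card_eq_two] at hcard
    obtain ⟨x, z, hxz, rfl⟩ := hcard
    have hx := hsub (show x ∈ ({x,z} : Finset α) by simp)
    have hz := hsub (show z ∈ ({x,z} : Finset α) by simp)
    simp only [Finset.mem_insert, Finset.mem_singleton] at hx hz
    rcases hx with rfl|rfl|rfl <;> rcases hz with rfl|rfl|rfl <;>
      simp_all [Finset.pair_comm]
  · rintro (rfl|rfl|rfl) <;>
      refine ⟨?_, by simp [Finset.card_pair, hab, hac, hbc]⟩ <;>
      · intro x hx
        simp only [Finset.mem_insert, Finset.mem_singleton] at hx ⊢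
        tauto

lemma finset_ne_of_mem {α : Type*} {c : α} {e f : Finset α}
    (hc : c ∉ e) (hc' : c ∈ f) : e ≠ f := fun h => hc (h ▸ hc')

/-- If a ternary edge-weighting sums to 0 on every triangle of K_n, n ≥ 5,
then it is constant on edges. -/
theorem stmt_9 (n : ℕ) (hn : 5 ≤ n) (y : Finset (Fin n) → ZMod 3)
    (h : ∀ K : Finset (Fin n), K.card = 3 →
      (∑ e ∈ K.powerset.filter (fun e => e.card = 2), y e) = 0) :
    ∀ e f : Finset (Fin n), e.card = 2 → f.card = 2 → y e = y f := by
  -- triangle relation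
  have htri : ∀ a b c : Fin n, a ≠ b → a ≠ c → b ≠ c →
      y {a,b} + y {a,c} + y {b,c} = 0 := by
    intro a b c hab hac hbc
    have hK : ({a,b,c} : Finset (Fin n)).card = 3 := by
      rw [Finset.card_insert_of_notMem (by simp [hab, hac]),
        Finset.card_insert_of_notMem (by simp [hbc]), Finset.card_singleton]
    have hs := h {a,b,c} hK
    rw [tri_enum hab hac hbc] at hs
    rw [Finset.sum_insert (by
        simp only [Finset.mem_insert, Finset.mem_singleton]
        push_neg
        exact ⟨finset_ne_of_mem (c := c) (by simp [Ne.symm hac, Ne.symm hbc]) (by simp),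
          finset_ne_of_mem (c := c) (by simp [Ne.symm hac, Ne.symm hbc]) (by simp)⟩),
      Finset.sum_insert (by
        simp only [Finset.mem_singleton]
        exact finset_ne_of_mem (c := b) (by simp [hab.symm, hbc]) (by simp)),
      Finset.sum_singleton] at hs
    linear_combination hs
  -- equality for disjoint edges
  have four : ∀ a b c d : Fin n, a ≠ b → a ≠ c → a ≠ d → b ≠ c → b ≠ d → c ≠ d →
      y {a,b} = y {c,d} := by
    intro a b c d hab hac had hbc hbd hcd
    have h1 := htri a b c hab hac hbc
    have h2 := htri a b d hab had hbd
    have h3 := htri a c d hac had hcd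
    have h4 := htri b c d hbc hbd hcd
    have h5 : 2 * y {a,b} = 2 * y {c,d} := by linear_combination h1 + h2 - h3 - h4
    exact mul_left_cancel₀ (by decide : (2 : ZMod 3) ≠ 0) h5
  intro e f he hf
  rw [Finset.card_eq_two] at he hf
  obtain ⟨a, b, hab, rfl⟩ := he
  obtain ⟨c, d, hcd, rfl⟩ := hf
  by_cases hdis : ({a,b} : Finset (Fin n)) ∩ {c,d} = ∅
  · -- all four distinct
    rw [Finset.eq_empty_iff_forall_notMem] at hdis
    simp only [Finset.mem_inter, Finset.mem_insert, Finset.mem_singleton, not_and, not_or]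
      at hdis
    have hac : a ≠ c := (hdis a (Or.inl rfl)).1
    have had : a ≠ d := (hdis a (Or.inl rfl)).2
    have hbc : b ≠ c := (hdis b (Or.inr rfl)).1
    have hbd : b ≠ d := (hdis b (Or.inr rfl)).2
    exact four a b c d hab hac had hbc hbd hcd
  · -- the two edges share a vertex; find two fresh vertices
    have hsub : ({a,b,c,d} : Finset (Fin n)).card ≤ 3 := by
      obtain ⟨x, hx⟩ := Finset.nonempty_iff_ne_empty.2 hdis
      simp only [Finset.mem_inter, Finset.mem_insert, Finset.mem_singleton] at hx
      obtain ⟨hx1, hx2⟩ := hx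
      have hle3 : ∀ u v w : Fin n, ({u,v,w} : Finset (Fin n)).card ≤ 3 := by
        intro u v w
        have h1 := Finset.card_insert_le u ({v,w} : Finset (Fin n))
        have h2 := Finset.card_insert_le v ({w} : Finset (Fin n))
        simp only [Finset.card_singleton] at h1 h2
        omega
      rcases hx1 with rfl | rfl <;> rcases hx2 with rfl | rfl
      · have : ({x,b,x,d} : Finset (Fin n)) = {x,b,d} := by
          ext t; simp; try tauto
        rw [this]; exact hle3 _ _ _
      · have : ({x,b,c,x} : Finset (Fin n)) = {x,b,c} := by
          ext t; simp; try tauto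
        rw [this]; exact hle3 _ _ _
      · have : ({a,x,x,d} : Finset (Fin n)) = {a,x,d} := by
          ext t; simp; try tauto
        rw [this]; exact hle3 _ _ _
      · have : ({a,x,c,x} : Finset (Fin n)) = {a,x,c} := by
          ext t; simp; try tauto
        rw [this]; exact hle3 _ _ _
    have hcompl : 1 < (({a,b,c,d} : Finset (Fin n))ᶜ).card := by
      rw [Finset.card_compl]
      have : Fintype.card (Fin n) = n := Fintype.card_fin n
      omega
    obtain ⟨u, hu, v, hv, huv⟩ := Finset.one_lt_card.mp hcompl
    simp only [Finset.mem_compl, Finset.mem_insert, Finset.mem_singleton, not_or] at hu hv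
    obtain ⟨hua, hub, huc, hud⟩ := hu
    obtain ⟨hva, hvb, hvc, hvd⟩ := hv
    have h1 : y {a,b} = y {u,v} :=
      four a b u v hab (Ne.symm hua) (Ne.symm hva) (Ne.symm hub) (Ne.symm hvb) huv
    have h2 : y {c,d} = y {u,v} :=
      four c d u v hcd (Ne.symm huc) (Ne.symm hvc) (Ne.symm hud) (Ne.symm hvd) huv
    rw [h1, h2]
end

section
/- Let n ≥ 5 and suppose y : binom([n],2) → ℤ satisfies y(e₁) + y(e₂) + y(e₃) ≡ 0 (mod 3) for the edges e₁,e₂,e₃ of every triangle of K_n, and gcd of all entries of y equals 1. Then either all entries of y are ≡ 1 (mod 3) or all entries are ≡ 2 (mod 3). -/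
private lemma pow_filter_eq (n : ℕ) (a b c : Fin n) (hab : a ≠ b) (hac : a ≠ c)
    (hbc : b ≠ c) :
    ({a,b,c} : Finset (Fin n)).powerset.filter (fun e => e.card = 2)
      = {{a,b},{a,c},{b,c}} := by
  ext e
  simp only [Finset.mem_filter, Finset.mem_powerset, Finset.mem_insert, Finset.mem_singleton]
  constructor
  · rintro ⟨hs, hc⟩
    obtain ⟨x, y, hxy, rfl⟩ := Finset.card_eq_two.mp hc
    have hx := hs (Finset.mem_insert_self x {y})
    have hy := hs (Finset.mem_insert_of_mem (Finset.mem_singleton_self y))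
    simp only [Finset.mem_insert, Finset.mem_singleton] at hx hy
    rcases hx with rfl|rfl|rfl <;> rcases hy with rfl|rfl|rfl <;> simp_all [Finset.pair_comm]
  · rintro (rfl|rfl|rfl) <;> constructor <;>
      first
      | (intro z hz; simp only [Finset.mem_insert, Finset.mem_singleton] at hz ⊢; tauto)
      | (rw [Finset.card_eq_two]; tauto)

private lemma tri_sum (n : ℕ) (a b c : Fin n) (hab : a ≠ b) (hac : a ≠ c) (hbc : b ≠ c)
    (y : Finset (Fin n) → ℤ)
    (h : ∀ K : Finset (Fin n), K.card = 3 →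
      (∑ e ∈ K.powerset.filter (fun e => e.card = 2), y e) % 3 = 0) :
    ((y {a,b} : ZMod 3)) + (y {a,c} : ZMod 3) + (y {b,c} : ZMod 3) = 0 := by
  have hK : ({a,b,c} : Finset (Fin n)).card = 3 :=
    Finset.card_eq_three.mpr ⟨a, b, c, hab, hac, hbc, rfl⟩
  have := h {a,b,c} hK
  rw [pow_filter_eq n a b c hab hac hbc] at this
  have h1 : ({a,b} : Finset (Fin n)) ≠ {a,c} := fun h => hbc (by
    have : b ∈ ({a,c} : Finset (Fin n)) := h ▸ by simp
    simpa [hab.symm] using this)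
  have h2 : ({a,b} : Finset (Fin n)) ≠ {b,c} := fun h => hac (by
    have : a ∈ ({b,c} : Finset (Fin n)) := h ▸ by simp
    simpa [hab] using this)
  have h3 : ({a,c} : Finset (Fin n)) ≠ {b,c} := fun h => hab (by
    have : a ∈ ({b,c} : Finset (Fin n)) := h ▸ by simp
    simpa [hac] using this)
  rw [Finset.sum_insert (by simp [h1, h2]), Finset.sum_insert (by simp [h3]),
    Finset.sum_singleton] at this
  have hdvd : (3 : ℤ) ∣ (y {a,b} + (y {a,c} + y {b,c})) := Int.dvd_of_emod_eq_zero this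
  have : ((y {a,b} + (y {a,c} + y {b,c}) : ℤ) : ZMod 3) = 0 :=
    (ZMod.intCast_zmod_eq_zero_iff_dvd _ 3).mpr (by exact_mod_cast hdvd)
  push_cast at this
  linear_combination this


private lemma disj_eq (n : ℕ) (y : Finset (Fin n) → ℤ)
    (h : ∀ K : Finset (Fin n), K.card = 3 →
      (∑ e ∈ K.powerset.filter (fun e => e.card = 2), y e) % 3 = 0)
    (e f : Finset (Fin n)) (he : e.card = 2) (hf : f.card = 2) (hd : Disjoint e f) :
    ((y e : ZMod 3)) = (y f : ZMod 3) := by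
  obtain ⟨a, b, hab, rfl⟩ := Finset.card_eq_two.mp he
  obtain ⟨c, d, hcd, rfl⟩ := Finset.card_eq_two.mp hf
  have hma : a ∈ ({a,b} : Finset (Fin n)) := by simp
  have hmb : b ∈ ({a,b} : Finset (Fin n)) := by simp
  have hac : a ≠ c := fun hh => (Finset.disjoint_left.mp hd hma) (by simp [hh])
  have had : a ≠ d := fun hh => (Finset.disjoint_left.mp hd hma) (by simp [hh])
  have hbc : b ≠ c := fun hh => (Finset.disjoint_left.mp hd hmb) (by simp [hh])
  have hbd : b ≠ d := fun hh => (Finset.disjoint_left.mp hd hmb) (by simp [hh])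
  have t1 := tri_sum n a b c hab hac hbc y h
  have t2 := tri_sum n a b d hab had hbd y h
  have t3 := tri_sum n a c d hac had hcd y h
  have t4 := tri_sum n b c d hbc hbd hcd y h
  have key : (2 : ZMod 3) * (y {a,b} : ZMod 3) = 2 * (y {c,d} : ZMod 3) := by
    linear_combination t1 + t2 - t3 - t4
  exact mul_left_cancel₀ (by decide : (2 : ZMod 3) ≠ 0) key

/-- An integer edge-weighting in standard form (gcd of entries 1) whose
triangle sums are all ≡ 0 (mod 3) has all entries ≡ 1 (mod 3) or all
entries ≡ 2 (mod 3). -/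
theorem stmt_11 (n : ℕ) (hn : 5 ≤ n) (y : Finset (Fin n) → ℤ)
    (h : ∀ K : Finset (Fin n), K.card = 3 →
      (∑ e ∈ K.powerset.filter (fun e => e.card = 2), y e) % 3 = 0)
    (hgcd : (Finset.univ.filter (fun e : Finset (Fin n) => e.card = 2)).gcd y = 1) :
    (∀ e : Finset (Fin n), e.card = 2 → y e % 3 = 1) ∨
    (∀ e : Finset (Fin n), e.card = 2 → y e % 3 = 2) := by
  -- any two edges have the same residue mod 3
  have hsame : ∀ e f : Finset (Fin n), e.card = 2 → f.card = 2 →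
      ((y e : ZMod 3)) = (y f : ZMod 3) := by
    intro e f he hf
    by_cases hd : Disjoint e f
    · exact disj_eq n y h e f he hf hd
    · -- they intersect, so their union has at most 3 vertices
      have hcard : (e ∪ f).card ≤ 3 := by
        have h1 : (e ∩ f).Nonempty := Finset.not_disjoint_iff_nonempty_inter.mp hd
        have := Finset.card_union_add_card_inter e f
        have h2 : 1 ≤ (e ∩ f).card := Finset.card_pos.mpr h1
        omega
      have hcompl : 2 ≤ ((e ∪ f)ᶜ).card := by
        have h1 := Finset.card_compl (e ∪ f)
        have h2 : Fintype.card (Fin n) = n := Fintype.card_fin n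
        omega
      obtain ⟨u, hu, v, hv, huv⟩ := Finset.one_lt_card.mp hcompl
      have hdu : Disjoint e {u, v} ∧ Disjoint f {u, v} := by
        simp only [Finset.mem_compl, Finset.mem_union] at hu hv
        refine ⟨Finset.disjoint_right.mpr ?_, Finset.disjoint_right.mpr ?_⟩ <;>
          · intro z hz
            simp only [Finset.mem_insert, Finset.mem_singleton] at hz
            rcases hz with rfl | rfl <;> tauto
      have hc2 : ({u, v} : Finset (Fin n)).card = 2 := Finset.card_pair huv
      rw [disj_eq n y h e {u,v} he hc2 hdu.1, ← disj_eq n y h f {u,v} hf hc2 hdu.2]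
  -- pick a fixed edge
  have h2n : (2 : ℕ) ≤ n := by omega
  set a0 : Fin n := ⟨0, by omega⟩
  set a1 : Fin n := ⟨1, by omega⟩
  have ha01 : a0 ≠ a1 := by simp [a0, a1, Fin.ext_iff]
  have he0 : ({a0, a1} : Finset (Fin n)).card = 2 := Finset.card_pair ha01
  set r : ZMod 3 := ((y {a0, a1} : ℤ) : ZMod 3) with hr
  have hall : ∀ e : Finset (Fin n), e.card = 2 → ((y e : ℤ) : ZMod 3) = r :=
    fun e he => hsame e _ he he0
  have hr3 : r = 0 ∨ r = 1 ∨ r = 2 :=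
    (by decide : ∀ x : ZMod 3, x = 0 ∨ x = 1 ∨ x = 2) r
  rcases hr3 with h0 | h1 | h2
  · -- contradiction with gcd = 1
    exfalso
    have hdvd : (3 : ℤ) ∣ (Finset.univ.filter (fun e : Finset (Fin n) => e.card = 2)).gcd y := by
      apply Finset.dvd_gcd
      intro e hemem
      have he : e.card = 2 := (Finset.mem_filter.mp hemem).2
      have := hall e he
      rw [h0] at this
      exact (ZMod.intCast_zmod_eq_zero_iff_dvd _ 3).mp this
    rw [hgcd] at hdvd
    norm_num at hdvd
  · left
    intro e he
    have := hall e he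
    rw [h1] at this
    have : y e ≡ 1 [ZMOD 3] := (ZMod.intCast_eq_intCast_iff _ _ _).mp (by push_cast; exact this)
    simpa [Int.ModEq] using this
  · right
    intro e he
    have := hall e he
    rw [h2] at this
    have : y e ≡ 2 [ZMOD 3] := (ZMod.intCast_eq_intCast_iff _ _ _).mp (by push_cast; exact this)
    simpa [Int.ModEq] using this
end

section
/- Let n be divisible by 4 and let G = C_4 · K_{n/4} be the lexicographic product of a 4-cycle with the complete graph on n/4 vertices (vertex set partitioned into 4 blocks V_1,...,V_4 of size n/4, all edges within each block, and all edges between consecutive blocks V_i, V_{i+1} indices mod 4). Let (A,B) = (V_1 ∪ V_3, V_2 ∪ V_4) and let y be the cut vector y(e) = 2 for edges within A or within B and y(e) = -1 otherwise. Then ⟨y, 1_G⟩ = 2(n²/8 - n/2) - n² /4 = -n < 0. Hence G does not have a fractional triangle decomposition. -/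
theorem divq (v q b : ℕ) (hq : 0 < q) : v / q = b ↔ q*b ≤ v ∧ v < q*(b+1) := by
  constructor
  · rintro rfl
    refine ⟨Nat.mul_div_le v q |>.trans_eq (by ring), ?_⟩
    have := (Nat.div_lt_iff_lt_mul hq).mp (Nat.lt_succ_self (v / q))
    linarith [this]
  · rintro ⟨h1, h2⟩
    exact Nat.div_eq_of_lt_le (by linarith) (by linarith)

theorem blockcard (n q b : ℕ) (hq : 0 < q) (hn : n = 4*q) (hb : b < 4) :
    (Finset.univ.filter (fun v : Fin n => v.val / q = b)).card = q := by
  have hle : q*b + q ≤ n := by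
    have : q*(b+1) ≤ q*4 := Nat.mul_le_mul_left q (by omega)
    have h2 : q*(b+1) = q*b + q := by ring
    have h3 : q*4 = 4*q := by ring
    omega
  have key : ∀ v : Fin n, v.val / q = b ↔ q*b ≤ v.val ∧ v.val < q*b + q := by
    intro v
    rw [divq _ _ _ hq]
    have : q*(b+1) = q*b + q := by ring
    omega
  calc (Finset.univ.filter (fun v : Fin n => v.val / q = b)).card
      = (Finset.univ : Finset (Fin q)).card := by
        apply Finset.card_bij' (fun v hv => (⟨v.val - q*b, by
            have hv' : v.val / q = b := (Finset.mem_filter.mp hv).2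
            have := (key v).mp hv'; omega⟩ : Fin q))
          (fun i _ => (⟨q*b + i.val, by have := i.isLt; omega⟩ : Fin n))
        case hi => intro v hv; simp
        case hj =>
          intro i _
          simp only [Finset.mem_filter, Finset.mem_univ, true_and]
          show (q*b + i.val) / q = b
          rw [divq _ _ _ hq]
          have := i.isLt
          have h2 : q*(b+1) = q*b + q := by ring
          omega
        case left_inv =>
          intro v hv
          have hkv := (key v).mp (Finset.mem_filter.mp hv).2
          apply Fin.ext; simp; omega
        case right_inv => intro i _; apply Fin.ext; simp
    _ = q := by simp

theorem pair_eq_aux {α : Type*} [DecidableEq α] {a b u v : α} (hab : a ≠ b)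
    (h : ({a, b} : Finset α) = {u, v}) : (a = u ∧ b = v) ∨ (a = v ∧ b = u) := by
  have ha : a ∈ ({u, v} : Finset α) := h ▸ (by simp)
  have hb : b ∈ ({u, v} : Finset α) := h ▸ (by simp)
  simp only [Finset.mem_insert, Finset.mem_singleton] at ha hb
  rcases ha with rfl | rfl <;> rcases hb with rfl | rfl <;> tauto

/-- For G = C₄ · K_{n/4} and the equatorial cut, ⟨y, 1_G⟩ = -n < 0, so G has
no fractional triangle decomposition. Vertex v lies in block `v.val / q`,
where n = 4q; A is the union of blocks 0 and 2 (blocks of even index). -/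
theorem stmt_13 (n q : ℕ) (hq : 0 < q) (hn : n = 4 * q)
    (blk : Fin n → ℕ) (hblk : ∀ v : Fin n, blk v = v.val / q)
    (G : Finset (Finset (Fin n)))
    (hG : ∀ e : Finset (Fin n), e ∈ G ↔ ∃ u v : Fin n, u ≠ v ∧ e = {u, v} ∧
      (blk u = blk v ∨ (blk u + 1) % 4 = blk v ∨ (blk v + 1) % 4 = blk u))
    (y : Finset (Fin n) → ℝ)
    (hy : ∀ e : Finset (Fin n),
      y e = if ∀ u ∈ e, ∀ v ∈ e, blk u % 2 = blk v % 2 then 2 else -1) :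
    (∑ e ∈ G, y e) = -(n : ℝ) ∧
    ¬ ∃ c : Finset (Fin n) → ℝ, (∀ K, 0 ≤ c K) ∧
      ∀ e : Finset (Fin n), e.card = 2 →
        (if e ∈ G then (1 : ℝ) else 0) =
          ∑ K ∈ Finset.univ.filter (fun K : Finset (Fin n) => K.card = 3),
            c K * (if e ⊆ K then 1 else 0) := by
  -- basic facts
  have hb4 : ∀ v : Fin n, blk v < 4 := by
    intro v
    rw [hblk]
    rw [Nat.div_lt_iff_lt_mul hq]
    have := v.isLt
    omega
  have ypair : ∀ u v : Fin n, u ≠ v →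
      y {u, v} = if blk u % 2 = blk v % 2 then 2 else -1 := by
    intro u v huv
    rw [hy]
    by_cases h : blk u % 2 = blk v % 2
    · rw [if_pos h, if_pos]
      intro a ha b hb
      simp only [Finset.mem_insert, Finset.mem_singleton] at ha hb
      rcases ha with rfl | rfl <;> rcases hb with rfl | rfl <;> omega
    · rw [if_neg h, if_neg]
      intro hall
      exact h (hall u (by simp) v (by simp))
  -- the adjacency relation
  set adj : Fin n → Fin n → Prop := fun u v =>
    blk u = blk v ∨ (blk u + 1) % 4 = blk v ∨ (blk v + 1) % 4 = blk u with hadj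
  have adj_symm : ∀ u v, adj u v ↔ adj v u := by intro u v; rw [hadj]; tauto
  have hGmem : ∀ u v : Fin n, u ≠ v → (({u, v} : Finset (Fin n)) ∈ G ↔ adj u v) := by
    intro u v huv
    rw [hG]
    constructor
    · rintro ⟨a, b, hab, habe, hadj'⟩
      rcases pair_eq_aux hab habe.symm with ⟨rfl, rfl⟩ | ⟨rfl, rfl⟩
      · exact hadj'
      · rw [adj_symm]; exact hadj'
    · intro h; exact ⟨u, v, huv, rfl, h⟩
  have hGcard : ∀ e ∈ G, e.card = 2 := by
    intro e he
    obtain ⟨u, v, huv, rfl, -⟩ := (hG e).mp he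
    exact Finset.card_pair huv
  classical
  -- the doubled sum over ordered pairs
  set S : Finset (Fin n × Fin n) :=
    (Finset.univ ×ˢ Finset.univ).filter (fun p => p.1 ≠ p.2 ∧ adj p.1 p.2) with hS
  have hmaps : ∀ p ∈ S, ({p.1, p.2} : Finset (Fin n)) ∈ G := by
    intro p hp
    rw [hS, Finset.mem_filter] at hp
    exact (hGmem p.1 p.2 hp.2.1).mpr hp.2.2
  have double : ∑ p ∈ S, y {p.1, p.2} = 2 * ∑ e ∈ G, y e := by
    rw [← Finset.sum_fiberwise_of_maps_to hmaps (fun p => y {p.1, p.2})]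
    rw [Finset.mul_sum]
    apply Finset.sum_congr rfl
    intro e he
    obtain ⟨u, v, huv, rfl, hadje⟩ := (hG e).mp he
    have hfib : S.filter (fun p => ({p.1, p.2} : Finset (Fin n)) = {u, v}) =
        {(u, v), (v, u)} := by
      ext p
      simp only [Finset.mem_filter, hS, Finset.mem_product, Finset.mem_univ,
        true_and, Finset.mem_insert, Finset.mem_singleton]
      constructor
      · rintro ⟨⟨hne, -⟩, hpe⟩
        rcases pair_eq_aux hne hpe with ⟨h1, h2⟩ | ⟨h1, h2⟩
        · left; ext <;> simp [h1, h2]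
        · right; ext <;> simp [h1, h2]
      · rintro (rfl | rfl)
        · exact ⟨⟨huv, hadje⟩, rfl⟩
        · refine ⟨⟨huv.symm, (adj_symm v u).mpr hadje⟩, ?_⟩
          simp [Finset.pair_comm]
    rw [hfib]
    rw [Finset.sum_insert (by simp [Prod.ext_iff]; intro h; exact absurd h huv)]
    rw [Finset.sum_singleton]
    simp only []
    rw [Finset.pair_comm v u]
    ring
  -- counting blocks
  have scount : ∀ b, b < 4 → (∑ v : Fin n, if blk v = b then (-1:ℝ) else 0) = -(q:ℝ) := by
    intro b hb
    rw [← Finset.sum_filter]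
    have hfe : Finset.univ.filter (fun v : Fin n => blk v = b) =
        Finset.univ.filter (fun v : Fin n => v.val / q = b) := by
      apply Finset.filter_congr
      intro v _
      rw [hblk]
    rw [hfe, Finset.sum_const, blockcard n q b hq hn hb]
    simp
  -- per-vertex row sums
  have hSsum : ∑ p ∈ S, y {p.1, p.2} = -2 * (n : ℝ) := by
    rw [hS, Finset.sum_filter, Finset.sum_product]
    have hrow : ∀ u : Fin n,
        (∑ v : Fin n, if u ≠ v ∧ adj u v then y {u, v} else 0) = -2 := by
      intro u
      have hbu : blk u < 4 := hb4 u
      have hpt : ∀ v : Fin n, (if u ≠ v ∧ adj u v then y {u, v} else 0) =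
          ((if v ≠ u ∧ blk v = blk u then (2:ℝ) else 0) +
           (if blk v = (blk u + 1) % 4 then (-1:ℝ) else 0) +
           (if blk v = (blk u + 3) % 4 then (-1:ℝ) else 0)) := by
        intro v
        have hbv : blk v < 4 := hb4 v
        by_cases huv : u = v
        · subst huv
          rw [if_neg (by tauto), if_neg (by tauto), if_neg (by omega),
            if_neg (by omega)]
          norm_num
        · rw [ypair u v huv]
          have hcond : (u ≠ v ∧ adj u v) = adj u v := by simp [huv]
          have hvu : (v ≠ u ∧ blk v = blk u) = (blk v = blk u) := by
            simp [Ne.symm huv]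
          simp only [hcond, hvu]
          simp only [hadj]
          split_ifs <;> first | (exfalso; omega) | norm_num
      rw [Finset.sum_congr rfl (fun v _ => hpt v)]
      rw [Finset.sum_add_distrib, Finset.sum_add_distrib]
      have s1 : (∑ v : Fin n, if v ≠ u ∧ blk v = blk u then (2:ℝ) else 0) =
          2 * ((q:ℝ) - 1) := by
        rw [← Finset.sum_filter]
        have hfe : Finset.univ.filter (fun v : Fin n => v ≠ u ∧ blk v = blk u) =
            (Finset.univ.filter (fun v : Fin n => v.val / q = blk u)).erase u := by
          ext v
          simp only [Finset.mem_filter, Finset.mem_erase, Finset.mem_univ, true_and,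
            ← hblk]
        rw [hfe, Finset.sum_const]
        rw [Finset.card_erase_of_mem (by
          simp only [Finset.mem_filter, Finset.mem_univ, true_and, ← hblk])]
        rw [blockcard n q (blk u) hq hn hbu]
        rw [nsmul_eq_mul, Nat.cast_sub hq]
        push_cast
        ring
      rw [s1, scount _ (Nat.mod_lt _ (by norm_num)), scount _ (Nat.mod_lt _ (by norm_num))]
      ring
    rw [Finset.sum_congr rfl (fun u _ => hrow u)]
    rw [Finset.sum_const, Finset.card_univ, Fintype.card_fin]
    ring
  have hfirst : (∑ e ∈ G, y e) = -(n : ℝ) := by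
    have h2 : 2 * ∑ e ∈ G, y e = -2 * (n : ℝ) := by rw [← double, hSsum]
    linarith
  refine ⟨hfirst, ?_⟩
  rintro ⟨c, hc, hdecomp⟩
  set E2 := Finset.univ.filter (fun e : Finset (Fin n) => e.card = 2) with hE2
  set T3 := Finset.univ.filter (fun K : Finset (Fin n) => K.card = 3) with hT3
  -- multiply the decomposition identity by y e and sum over all 2-sets
  have key : ∑ e ∈ G, y e =
      ∑ K ∈ T3, c K * ∑ e ∈ E2.filter (· ⊆ K), y e := by
    have lhs : ∑ e ∈ G, y e = ∑ e ∈ E2, y e * (if e ∈ G then (1:ℝ) else 0) := by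
      have h1 : ∀ e ∈ E2, y e * (if e ∈ G then (1:ℝ) else 0) =
          (if e ∈ G then y e else 0) := by
        intro e _
        split_ifs <;> ring
      rw [Finset.sum_congr rfl h1, ← Finset.sum_filter]
      congr 1
      ext e
      simp only [hE2, Finset.mem_filter, Finset.mem_univ, true_and]
      exact ⟨fun h => ⟨hGcard e h, h⟩, fun h => h.2⟩
    rw [lhs]
    rw [Finset.sum_congr rfl (fun e he => by
      rw [hdecomp e (by simpa [hE2] using he)])]
    calc ∑ e ∈ E2, y e * ∑ K ∈ T3, c K * (if e ⊆ K then (1:ℝ) else 0)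
        = ∑ e ∈ E2, ∑ K ∈ T3, y e * (c K * (if e ⊆ K then (1:ℝ) else 0)) := by
          exact Finset.sum_congr rfl (fun e _ => Finset.mul_sum _ _ _)
      _ = ∑ K ∈ T3, ∑ e ∈ E2, y e * (c K * (if e ⊆ K then (1:ℝ) else 0)) :=
          Finset.sum_comm
      _ = ∑ K ∈ T3, c K * ∑ e ∈ E2.filter (· ⊆ K), y e := by
          apply Finset.sum_congr rfl
          intro K _
          rw [Finset.sum_filter (fun e => e ⊆ K) y, Finset.mul_sum]
          apply Finset.sum_congr rfl
          intro e _
          split_ifs <;> ring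
  -- each triangle contributes nonnegatively
  have tri : ∀ K ∈ T3, 0 ≤ ∑ e ∈ E2.filter (· ⊆ K), y e := by
    intro K hK
    have hKcard : K.card = 3 := by simpa [hT3] using hK
    obtain ⟨a, b, d, hab, had, hbd, rfl⟩ := Finset.card_eq_three.mp hKcard
    have hset : E2.filter (· ⊆ ({a, b, d} : Finset (Fin n))) =
        {({a, b} : Finset (Fin n)), {a, d}, {b, d}} := by
      ext e
      simp only [hE2, Finset.mem_filter, Finset.mem_univ, true_and,
        Finset.mem_insert, Finset.mem_singleton]
      constructor
      · rintro ⟨hcard, hsub⟩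
        obtain ⟨x, z, hxz, rfl⟩ := Finset.card_eq_two.mp hcard
        have hx : x ∈ ({a, b, d} : Finset (Fin n)) := hsub (by simp)
        have hz : z ∈ ({a, b, d} : Finset (Fin n)) := hsub (by simp)
        simp only [Finset.mem_insert, Finset.mem_singleton] at hx hz
        rcases hx with rfl | rfl | rfl <;> rcases hz with rfl | rfl | rfl <;>
          first
          | exact absurd rfl hxz
          | exact Or.inl rfl
          | exact Or.inl (Finset.pair_comm _ _)
          | exact Or.inr (Or.inl rfl)
          | exact Or.inr (Or.inl (Finset.pair_comm _ _))
          | exact Or.inr (Or.inr rfl)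
          | exact Or.inr (Or.inr (Finset.pair_comm _ _))
      · rintro (rfl | rfl | rfl)
        · exact ⟨Finset.card_pair hab, by intro x hx; simp at hx; rcases hx with rfl | rfl <;> simp⟩
        · exact ⟨Finset.card_pair had, by intro x hx; simp at hx; rcases hx with rfl | rfl <;> simp⟩
        · exact ⟨Finset.card_pair hbd, by intro x hx; simp at hx; rcases hx with rfl | rfl <;> simp⟩
    rw [hset]
    have h1 : ({a, b} : Finset (Fin n)) ∉ ({({a, d} : Finset (Fin n)), {b, d}} : Finset (Finset (Fin n))) := by
      simp only [Finset.mem_insert, Finset.mem_singleton]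
      push_neg
      constructor
      · intro h
        have : b ∈ ({a, d} : Finset (Fin n)) := h ▸ (by simp)
        simp at this
        tauto
      · intro h
        have : a ∈ ({b, d} : Finset (Fin n)) := h ▸ (by simp)
        simp at this
        tauto
    have h2 : ({a, d} : Finset (Fin n)) ∉ ({({b, d} : Finset (Fin n))} : Finset (Finset (Fin n))) := by
      simp only [Finset.mem_singleton]
      intro h
      have : a ∈ ({b, d} : Finset (Fin n)) := h ▸ (by simp)
      simp at this
      tauto
    rw [Finset.sum_insert h1, Finset.sum_insert h2, Finset.sum_singleton]
    rw [ypair a b hab, ypair a d had, ypair b d hbd]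
    split_ifs <;> first | (exfalso; omega) | norm_num
  -- conclude
  have hge : 0 ≤ ∑ K ∈ T3, c K * ∑ e ∈ E2.filter (· ⊆ K), y e :=
    Finset.sum_nonneg (fun K hK => mul_nonneg (hc K) (tri K hK))
  rw [← key, hfirst] at hge
  have hn0 : 0 < n := by omega
  have : (0:ℝ) < (n:ℝ) := by exact_mod_cast hn0
  linarith
end

section
/- Let n ≥ 8 and (A,B) a partition of {3,...,n} with |A|,|B| ≥ 3. Let G be the graph on [n] with edge set: all 2-subsets of A ∪ B, the edges {2,a} for a ∈ A, the edges {1,b} for b ∈ B, and the edge {1,2}. Let y be the binary star vector (y({1,2}) = -1, y({1,a}) = 1 for a ∈ A, y({2,b}) = 1 for b ∈ B, y = 0 elsewhere). Then ⟨y, 1_G⟩ = -1, so G has no fractional triangle decomposition. -/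
/-- The binary star vector has inner product -1 with the indicator of the
graph built from K_{n-2} on A ∪ B, the edges from 2 to A, from 1 to B, and
the edge {1,2}; hence this graph has no fractional triangle decomposition. -/
theorem stmt_15 (n : ℕ) (hn : 8 ≤ n)
    (v1 v2 : Fin n) (hv1 : v1 = ⟨0, by omega⟩) (hv2 : v2 = ⟨1, by omega⟩)
    (A B : Finset (Fin n)) (hdisj : Disjoint A B)
    (hpart : A ∪ B = ({v1, v2} : Finset (Fin n))ᶜ)
    (hA : 3 ≤ A.card) (hB : 3 ≤ B.card)
    (y : Finset (Fin n) → ℝ)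
    (hy : ∀ e : Finset (Fin n),
      y e = if e = ({v1, v2} : Finset (Fin n)) then -1
            else if (∃ a ∈ A, e = ({v1, a} : Finset (Fin n))) ∨
                    (∃ b ∈ B, e = ({v2, b} : Finset (Fin n))) then 1 else 0)
    (G : Finset (Finset (Fin n)))
    (hG : ∀ e : Finset (Fin n), e ∈ G ↔
      ((e ⊆ A ∪ B ∧ e.card = 2) ∨ e = ({v1, v2} : Finset (Fin n)) ∨
       (∃ a ∈ A, e = ({v2, a} : Finset (Fin n))) ∨
       (∃ b ∈ B, e = ({v1, b} : Finset (Fin n))))) :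
    (∑ e ∈ G, y e) = -1 ∧
    ¬ ∃ c : Finset (Fin n) → ℝ, (∀ K, 0 ≤ c K) ∧
      ∀ e : Finset (Fin n), e.card = 2 →
        (if e ∈ G then (1 : ℝ) else 0) =
          ∑ K ∈ Finset.univ.filter (fun K : Finset (Fin n) => K.card = 3),
            c K * (if e ⊆ K then 1 else 0) := by
  have hv12 : v1 ≠ v2 := by subst hv1; subst hv2; simp [Fin.ext_iff]
  have hnotmem : ∀ x : Fin n, x ∈ A ∪ B ↔ (x ≠ v1 ∧ x ≠ v2) := by
    intro x
    rw [hpart, Finset.mem_compl]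
    simp [not_or]
  have hv1nm : v1 ∉ A ∪ B := by rw [hnotmem]; simp
  have hv2nm : v2 ∉ A ∪ B := by rw [hnotmem]; simp
  have hAne : ∀ a ∈ A, a ≠ v1 ∧ a ≠ v2 := fun a ha =>
    (hnotmem a).1 (Finset.mem_union_left _ ha)
  have hBne : ∀ b ∈ B, b ≠ v1 ∧ b ≠ v2 := fun b hb =>
    (hnotmem b).1 (Finset.mem_union_right _ hb)
  -- values of y
  have y0 : y ({v1, v2} : Finset (Fin n)) = -1 := by rw [hy]; simp
  have yA : ∀ a ∈ A, y ({v1, a} : Finset (Fin n)) = 1 := by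
    intro a ha
    have h1 : ({v1, a} : Finset (Fin n)) ≠ {v1, v2} := by
      intro h
      have hv : v2 ∈ ({v1, a} : Finset (Fin n)) := by rw [h]; simp
      rcases Finset.mem_insert.1 hv with h' | h'
      · exact hv12 h'.symm
      · exact (hAne a ha).2 (Finset.mem_singleton.1 h').symm
    rw [hy, if_neg h1, if_pos (Or.inl ⟨a, ha, rfl⟩)]
  have yB : ∀ b ∈ B, y ({v2, b} : Finset (Fin n)) = 1 := by
    intro b hb
    have h1 : ({v2, b} : Finset (Fin n)) ≠ {v1, v2} := by
      intro h
      have hv : v1 ∈ ({v2, b} : Finset (Fin n)) := by rw [h]; simp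
      rcases Finset.mem_insert.1 hv with h' | h'
      · exact hv12 h'
      · exact (hBne b hb).1 (Finset.mem_singleton.1 h').symm
    rw [hy, if_neg h1, if_pos (Or.inr ⟨b, hb, rfl⟩)]
  have ynn : ∀ e : Finset (Fin n), e ≠ ({v1, v2} : Finset (Fin n)) → 0 ≤ y e := by
    intro e he
    rw [hy, if_neg he]
    split <;> norm_num
  -- Part 1
  have he0G : ({v1, v2} : Finset (Fin n)) ∈ G := (hG _).2 (Or.inr (Or.inl rfl))
  have yG0 : ∀ e ∈ G, e ≠ ({v1, v2} : Finset (Fin n)) → y e = 0 := by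
    intro e heG hne
    rw [hy, if_neg hne, if_neg]
    rintro (⟨a, ha, rfl⟩ | ⟨b, hb, rfl⟩)
    · rcases (hG _).1 heG with ⟨hsub, _⟩ | h | ⟨a', ha', h⟩ | ⟨b', hb', h⟩
      · exact hv1nm (hsub (Finset.mem_insert_self _ _))
      · exact hne h
      · have hv : v1 ∈ ({v2, a'} : Finset (Fin n)) := by rw [← h]; simp
        rcases Finset.mem_insert.1 hv with h' | h'
        · exact hv12 h'
        · exact (hAne a' ha').1 (Finset.mem_singleton.1 h').symm
      · have hv : a ∈ ({v1, b'} : Finset (Fin n)) := by rw [← h]; simp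
        rcases Finset.mem_insert.1 hv with h' | h'
        · exact (hAne a ha).1 h'
        · exact Finset.disjoint_left.1 hdisj ha
            (by rw [Finset.mem_singleton.1 h']; exact hb')
    · rcases (hG _).1 heG with ⟨hsub, _⟩ | h | ⟨a', ha', h⟩ | ⟨b', hb', h⟩
      · exact hv2nm (hsub (Finset.mem_insert_self _ _))
      · exact hne h
      · have hv : b ∈ ({v2, a'} : Finset (Fin n)) := by rw [← h]; simp
        rcases Finset.mem_insert.1 hv with h' | h'
        · exact (hBne b hb).2 h'
        · exact Finset.disjoint_left.1 hdisj
            (by rw [Finset.mem_singleton.1 h']; exact ha') hb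
      · have hv : v2 ∈ ({v1, b'} : Finset (Fin n)) := by rw [← h]; simp
        rcases Finset.mem_insert.1 hv with h' | h'
        · exact hv12 h'.symm
        · exact (hBne b' hb').2 (Finset.mem_singleton.1 h').symm
  have hsum : (∑ e ∈ G, y e) = -1 := by
    rw [Finset.sum_eq_single_of_mem _ he0G (fun e he hne => yG0 e he hne), y0]
  refine ⟨hsum, ?_⟩
  rintro ⟨c, hc0, hcsum⟩
  set T := Finset.univ.filter (fun K : Finset (Fin n) => K.card = 3) with hT
  set E2 := Finset.univ.filter (fun e : Finset (Fin n) => e.card = 2) with hE2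
  have he0card : ({v1, v2} : Finset (Fin n)).card = 2 := Finset.card_pair hv12
  have hGsub : ∀ e ∈ G, e.card = 2 := by
    intro e he
    rcases (hG e).1 he with ⟨_, h⟩ | h | ⟨a, ha, h⟩ | ⟨b, hb, h⟩
    · exact h
    · rw [h]; exact he0card
    · rw [h]; exact Finset.card_pair (fun h' => (hAne a ha).2 h'.symm)
    · rw [h]; exact Finset.card_pair (fun h' => (hBne b hb).1 h'.symm)
  have hfilter : E2.filter (fun e => e ∈ G) = G := by
    ext e
    simp only [hE2, Finset.mem_filter, Finset.mem_univ, true_and]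
    exact ⟨fun h => h.2, fun h => ⟨hGsub e h, h⟩⟩
  have key : (∑ e ∈ G, y e)
      = ∑ K ∈ T, c K * ∑ e ∈ E2, y e * (if e ⊆ K then (1:ℝ) else 0) := by
    calc ∑ e ∈ G, y e = ∑ e ∈ E2, (if e ∈ G then y e else 0) := by
          rw [← Finset.sum_filter, hfilter]
      _ = ∑ e ∈ E2, y e * (if e ∈ G then (1:ℝ) else 0) := by
          apply Finset.sum_congr rfl; intro e _; split <;> ring
      _ = ∑ e ∈ E2, y e * ∑ K ∈ T, c K * (if e ⊆ K then (1:ℝ) else 0) := by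
          apply Finset.sum_congr rfl; intro e he
          rw [hcsum e (Finset.mem_filter.1 he).2]
      _ = ∑ e ∈ E2, ∑ K ∈ T, c K * (y e * (if e ⊆ K then (1:ℝ) else 0)) := by
          apply Finset.sum_congr rfl; intro e _
          rw [Finset.mul_sum]; apply Finset.sum_congr rfl; intro K _; ring
      _ = ∑ K ∈ T, ∑ e ∈ E2, c K * (y e * (if e ⊆ K then (1:ℝ) else 0)) :=
          Finset.sum_comm
      _ = ∑ K ∈ T, c K * ∑ e ∈ E2, y e * (if e ⊆ K then (1:ℝ) else 0) := by
          apply Finset.sum_congr rfl; intro K _; rw [Finset.mul_sum]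
  have hs : ∀ K ∈ T, 0 ≤ ∑ e ∈ E2, y e * (if e ⊆ K then (1:ℝ) else 0) := by
    intro K hK
    have hK3 : K.card = 3 := (Finset.mem_filter.1 hK).2
    by_cases h12 : ({v1, v2} : Finset (Fin n)) ⊆ K
    · have hcard1 : (K \ ({v1, v2} : Finset (Fin n))).card = 1 := by
        rw [Finset.card_sdiff_of_subset h12, hK3, he0card]
      obtain ⟨x, hx⟩ := Finset.card_eq_one.1 hcard1
      have hxmem := Finset.mem_sdiff.1 (hx ▸ Finset.mem_singleton_self x)
      have hxK : x ∈ K := hxmem.1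
      have hxe0 : x ∉ ({v1, v2} : Finset (Fin n)) := hxmem.2
      have hx1 : x ≠ v1 := fun h => hxe0 (by rw [h]; simp)
      have hx2 : x ≠ v2 := fun h => hxe0 (by rw [h]; simp)
      have hxAB : x ∈ A ∪ B := (hnotmem x).2 ⟨hx1, hx2⟩
      have hv1K : v1 ∈ K := h12 (by simp)
      have hv2K : v2 ∈ K := h12 (by simp)
      obtain ⟨e1, he1card, he1ne, he1sub, he1y⟩ :
          ∃ e1 : Finset (Fin n), e1.card = 2 ∧
            e1 ≠ ({v1, v2} : Finset (Fin n)) ∧ e1 ⊆ K ∧ y e1 = 1 := by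
        rcases Finset.mem_union.1 hxAB with hxa | hxb
        · refine ⟨{v1, x}, Finset.card_pair (Ne.symm hx1), ?_, ?_, yA x hxa⟩
          · intro h
            have hv : v2 ∈ ({v1, x} : Finset (Fin n)) := by rw [h]; simp
            rcases Finset.mem_insert.1 hv with h' | h'
            · exact hv12 h'.symm
            · exact hx2 (Finset.mem_singleton.1 h').symm
          · intro z hz
            rcases Finset.mem_insert.1 hz with h' | h'
            · rw [h']; exact hv1K
            · rw [Finset.mem_singleton.1 h']; exact hxK
        · refine ⟨{v2, x}, Finset.card_pair (Ne.symm hx2), ?_, ?_, yB x hxb⟩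
          · intro h
            have hv : v1 ∈ ({v2, x} : Finset (Fin n)) := by rw [h]; simp
            rcases Finset.mem_insert.1 hv with h' | h'
            · exact hv12 h'
            · exact hx1 (Finset.mem_singleton.1 h').symm
          · intro z hz
            rcases Finset.mem_insert.1 hz with h' | h'
            · rw [h']; exact hv2K
            · rw [Finset.mem_singleton.1 h']; exact hxK
      have he0E2 : ({v1, v2} : Finset (Fin n)) ∈ E2 :=
        Finset.mem_filter.2 ⟨Finset.mem_univ _, he0card⟩
      have he1E2 : e1 ∈ E2 := Finset.mem_filter.2 ⟨Finset.mem_univ _, he1card⟩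
      have he1E2' : e1 ∈ E2.erase ({v1, v2} : Finset (Fin n)) :=
        Finset.mem_erase.2 ⟨he1ne, he1E2⟩
      rw [← Finset.add_sum_erase _ _ he0E2, ← Finset.add_sum_erase _ _ he1E2']
      have h1 : y ({v1, v2} : Finset (Fin n)) *
          (if ({v1, v2} : Finset (Fin n)) ⊆ K then (1:ℝ) else 0) = -1 := by
        rw [y0, if_pos h12]; ring
      have h2 : y e1 * (if e1 ⊆ K then (1:ℝ) else 0) = 1 := by
        rw [he1y, if_pos he1sub]; ring
      have h3 : 0 ≤ ∑ e ∈ (E2.erase ({v1, v2} : Finset (Fin n))).erase e1,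
          y e * (if e ⊆ K then (1:ℝ) else 0) := by
        apply Finset.sum_nonneg
        intro e he
        have hene : e ≠ ({v1, v2} : Finset (Fin n)) :=
          (Finset.mem_erase.1 (Finset.mem_erase.1 he).2).1
        have hnn := ynn e hene
        split
        · simpa using hnn
        · simp
      rw [h1, h2]
      linarith
    · apply Finset.sum_nonneg
      intro e _
      by_cases hee : e = ({v1, v2} : Finset (Fin n))
      · rw [hee, if_neg h12]; simp
      · have hnn := ynn e hee
        split
        · simpa using hnn
        · simp
  have hpos : (0:ℝ) ≤ ∑ K ∈ T, c K * ∑ e ∈ E2, y e * (if e ⊆ K then (1:ℝ) else 0) :=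
    Finset.sum_nonneg fun K hK => mul_nonneg (hc0 K) (hs K hK)
  rw [hsum] at key
  linarith
end
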